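/- Let f ∈ Γ₀(ℝ^n) be sparsity promoting, α, β > 0, and f_α = f − env_{αf}. For any x in the domain of f, every element p of prox_{βf_α}(x) := argmin_u { f_α(u) + (1/(2β))‖u−x‖² } satisfies ‖p − x‖ ≤ ‖x‖. -/

import Mathlib

open Set
open scoped RealInnerProductSpace Pointwise

noncomputable section

abbrev E (n : ℕ) := EuclideanSpace ℝ (Fin n)

/-- Convex subdifferential. -/
def subdiff {n : ℕ} (f : E n → ℝ) (x : E n) : Set (E n) :=
  {d | ∀ y, f x + ⟪d, y - x⟫ ≤ f y}

/-- Fréchet subdifferential. -/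
def fsubdiff {n : ℕ} (f : E n → ℝ) (x : E n) : Set (E n) :=
  {d | ∀ ε > (0:ℝ), ∃ δ > (0:ℝ), ∀ u, ‖u - x‖ < δ →
    f x + ⟪d, u - x⟫ - ε * ‖u - x‖ ≤ f u}

/-- Sparsity promoting: value 0 at the origin is the global minimum and the
subdifferential at 0 contains a nonzero element. -/
def SparsityPromoting {n : ℕ} (f : E n → ℝ) : Prop :=
  f 0 = 0 ∧ (∀ x, f 0 ≤ f x) ∧ ∃ d ∈ subdiff f 0, d ≠ 0

/-- Moreau envelope with parameter `α`. -/
def env {n : ℕ} (α : ℝ) (f : E n → ℝ) (x : E n) : ℝ :=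
  sInf (Set.range fun u => f u + ‖u - x‖ ^ 2 / (2 * α))

/-- Proximity operator (as a set of minimizers). -/
def proxSet {n : ℕ} (α : ℝ) (f : E n → ℝ) (x : E n) : Set (E n) :=
  {p | ∀ u, f p + ‖p - x‖ ^ 2 / (2 * α) ≤ f u + ‖u - x‖ ^ 2 / (2 * α)}

theorem stmt7 {n : ℕ} (f : E n → ℝ) (hconv : ConvexOn ℝ Set.univ f)
    (hlsc : LowerSemicontinuous f) (hsp : SparsityPromoting f)
    (α β : ℝ) (hα : 0 < α) (hβ : 0 < β) :
    ∀ x : E n, ∀ p ∈ proxSet β (fun u => f u - env α f u) x, ‖p - x‖ ≤ ‖x‖ := by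
  obtain ⟨hf0, hmin, -⟩ := hsp
  have hf_nonneg : ∀ u, 0 ≤ f u := fun u => hf0 ▸ hmin u
  have hbdd : ∀ y : E n, BddBelow (Set.range fun u => f u + ‖u - y‖ ^ 2 / (2 * α)) := by
    intro y
    refine ⟨0, fun b hb => ?_⟩
    obtain ⟨u, rfl⟩ := hb
    have : 0 ≤ ‖u - y‖ ^ 2 / (2 * α) := by positivity
    linarith [hf_nonneg u]
  have henv_le : ∀ y, env α f y ≤ f y := by
    intro y
    have h := csInf_le (hbdd y) (Set.mem_range.mpr ⟨y, rfl⟩)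
    simpa [env] using h
  have henv_nonneg : ∀ y, 0 ≤ env α f y := by
    intro y
    refine le_csInf (Set.range_nonempty _) ?_
    rintro b ⟨u, rfl⟩
    have : 0 ≤ ‖u - y‖ ^ 2 / (2 * α) := by positivity
    linarith [hf_nonneg u]
  have henv0 : env α f 0 = 0 :=
    le_antisymm (by simpa [hf0] using henv_le 0) (henv_nonneg 0)
  intro x p hp
  have key := hp 0
  simp only [henv0, hf0, zero_sub, norm_neg] at key
  have hfa : 0 ≤ f p - env α f p := sub_nonneg.mpr (henv_le p)
  have h2β : 0 < 2 * β := by linarith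
  have hsq : ‖p - x‖ ^ 2 ≤ ‖x‖ ^ 2 := by
    have h1 : ‖p - x‖ ^ 2 / (2 * β) ≤ ‖x‖ ^ 2 / (2 * β) := by linarith
    exact (div_le_div_iff_of_pos_right h2β).mp h1
  nlinarith [norm_nonneg (p - x), norm_nonneg x]
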